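/- Let G be a finite connected simple graph on a vertex type V, with V nonempty. Then the kernel of the length homomorphism ℓ : A_G → ℤ is generated, as a subgroup of A_G, by the set { ū⁻¹·v̄ : u and v adjacent in G }. -/

import Mathlib

/-- The relator set of the right-angled Artin group of a simple graph `G`:
commutators of pairs of adjacent vertices. -/
def raagRels {V : Type*} (G : SimpleGraph V) : Set (FreeGroup V) :=
  {r | ∃ u v : V, G.Adj u v ∧
    r = FreeGroup.of u * FreeGroup.of v * (FreeGroup.of u)⁻¹ * (FreeGroup.of v)⁻¹}

/-- The right-angled Artin group of a simple graph `G`. -/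
abbrev RAAG {V : Type*} (G : SimpleGraph V) : Type _ :=
  PresentedGroup (raagRels G)

/-- The image `v̄` of a vertex (generator) `v` in the right-angled Artin group. -/
def RAAG.gen {V : Type*} (G : SimpleGraph V) (v : V) : RAAG G :=
  PresentedGroup.of (rels := raagRels G) v

lemma RAAG.gen_comm {V : Type*} (G : SimpleGraph V) {u v : V} (h : G.Adj u v) :
    RAAG.gen G u * RAAG.gen G v = RAAG.gen G v * RAAG.gen G u := by
  have hr : FreeGroup.of u * FreeGroup.of v * (FreeGroup.of u)⁻¹ * (FreeGroup.of v)⁻¹ ∈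
      raagRels G := ⟨u, v, h, rfl⟩
  have h1 : (PresentedGroup.mk (raagRels G)
      (FreeGroup.of u * FreeGroup.of v * (FreeGroup.of u)⁻¹ * (FreeGroup.of v)⁻¹)) = 1 := by
    have : (QuotientGroup.mk (FreeGroup.of u * FreeGroup.of v * (FreeGroup.of u)⁻¹ *
        (FreeGroup.of v)⁻¹) : RAAG G) = 1 :=
      (QuotientGroup.eq_one_iff _).mpr (Subgroup.subset_normalClosure hr)
    exact this
  have h2 : RAAG.gen G u * RAAG.gen G v * (RAAG.gen G u)⁻¹ * (RAAG.gen G v)⁻¹ = 1 := by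
    simpa [map_mul, map_inv, RAAG.gen, PresentedGroup.of] using h1
  rw [mul_inv_eq_one, mul_inv_eq_iff_eq_mul] at h2
  exact h2

lemma RAAG.gen_commute {V : Type*} (G : SimpleGraph V) {u v : V} (h : G.Adj u v) :
    Commute (RAAG.gen G u) (RAAG.gen G v) := RAAG.gen_comm G h

theorem stmt_3 {V : Type*} [Finite V] [Nonempty V] (G : SimpleGraph V)
    (hconn : G.Connected)
    (ℓ : RAAG G →* Multiplicative ℤ)
    (hℓ : ∀ v : V, ℓ (RAAG.gen G v) = Multiplicative.ofAdd 1) :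
    ℓ.ker = Subgroup.closure
      {x : RAAG G | ∃ u v : V, G.Adj u v ∧ x = (RAAG.gen G u)⁻¹ * RAAG.gen G v} := by
  set S : Subgroup (RAAG G) := Subgroup.closure
      {x : RAAG G | ∃ u v : V, G.Adj u v ∧ x = (RAAG.gen G u)⁻¹ * RAAG.gen G v} with hS
  -- basic membership
  have memS : ∀ u v : V, G.Adj u v → (RAAG.gen G u)⁻¹ * RAAG.gen G v ∈ S := fun u v h =>
    Subgroup.subset_closure ⟨u, v, h, rfl⟩
  have memS' : ∀ u v : V, G.Adj u v → RAAG.gen G u * (RAAG.gen G v)⁻¹ ∈ S := by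
    intro u v h
    rw [((RAAG.gen_commute G h).inv_right).eq]
    exact memS v u h.symm
  -- path products: arbitrary pairs
  have key : ∀ (u v : V), (RAAG.gen G u)⁻¹ * RAAG.gen G v ∈ S ∧
      RAAG.gen G u * (RAAG.gen G v)⁻¹ ∈ S := by
    intro u v
    obtain ⟨p⟩ := hconn.preconnected u v
    induction p with
    | nil =>
      refine ⟨?_, ?_⟩ <;> simp <;> exact one_mem S
    | @cons u w v h' p ih =>
      constructor
      · have : (RAAG.gen G u)⁻¹ * RAAG.gen G v =
            ((RAAG.gen G u)⁻¹ * RAAG.gen G w) * ((RAAG.gen G w)⁻¹ * RAAG.gen G v) := by group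
        rw [this]; exact mul_mem (memS u w h') ih.1
      · have : RAAG.gen G u * (RAAG.gen G v)⁻¹ =
            (RAAG.gen G u * (RAAG.gen G w)⁻¹) * (RAAG.gen G w * (RAAG.gen G v)⁻¹) := by group
        rw [this]; exact mul_mem (memS' u w h') ih.2
  -- conjugation by a generator or its inverse preserves S
  have conjS : ∀ (w : V) (s : RAAG G), s ∈ S → RAAG.gen G w * s * (RAAG.gen G w)⁻¹ ∈ S := by
    intro w s hs
    induction hs using Subgroup.closure_induction with
    | mem x hx =>
      obtain ⟨u, v, h, rfl⟩ := hx
      have hmid : RAAG.gen G u * ((RAAG.gen G u)⁻¹ * RAAG.gen G v) * (RAAG.gen G u)⁻¹ =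
          (RAAG.gen G u)⁻¹ * RAAG.gen G v := by
        rw [mul_inv_cancel_left]
        exact ((RAAG.gen_commute G h).inv_left).eq.symm
      have : RAAG.gen G w * ((RAAG.gen G u)⁻¹ * RAAG.gen G v) * (RAAG.gen G w)⁻¹ =
          (RAAG.gen G w * (RAAG.gen G u)⁻¹) *
            (RAAG.gen G u * ((RAAG.gen G u)⁻¹ * RAAG.gen G v) * (RAAG.gen G u)⁻¹) *
            (RAAG.gen G u * (RAAG.gen G w)⁻¹) := by group
      rw [this, hmid]
      exact mul_mem (mul_mem (key w u).2 (memS u v h)) (key u w).2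
    | one => simpa using one_mem S
    | mul x y _ _ hx hy =>
      have : RAAG.gen G w * (x * y) * (RAAG.gen G w)⁻¹ =
          (RAAG.gen G w * x * (RAAG.gen G w)⁻¹) * (RAAG.gen G w * y * (RAAG.gen G w)⁻¹) := by
        group
      rw [this]; exact mul_mem hx hy
    | inv x _ hx =>
      have : RAAG.gen G w * x⁻¹ * (RAAG.gen G w)⁻¹ =
          (RAAG.gen G w * x * (RAAG.gen G w)⁻¹)⁻¹ := by group
      rw [this]; exact inv_mem hx
  have conjS' : ∀ (w : V) (s : RAAG G), s ∈ S → (RAAG.gen G w)⁻¹ * s * RAAG.gen G w ∈ S := by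
    intro w s hs
    induction hs using Subgroup.closure_induction with
    | mem x hx =>
      obtain ⟨u, v, h, rfl⟩ := hx
      have hmid : (RAAG.gen G u)⁻¹ * ((RAAG.gen G u)⁻¹ * RAAG.gen G v) * RAAG.gen G u =
          (RAAG.gen G u)⁻¹ * RAAG.gen G v := by
        have h1 : RAAG.gen G v * RAAG.gen G u = RAAG.gen G u * RAAG.gen G v :=
          (RAAG.gen_comm G h).symm
        rw [mul_assoc, mul_assoc, h1, inv_mul_cancel_left]
      have : (RAAG.gen G w)⁻¹ * ((RAAG.gen G u)⁻¹ * RAAG.gen G v) * RAAG.gen G w =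
          ((RAAG.gen G w)⁻¹ * RAAG.gen G u) *
            ((RAAG.gen G u)⁻¹ * ((RAAG.gen G u)⁻¹ * RAAG.gen G v) * RAAG.gen G u) *
            ((RAAG.gen G u)⁻¹ * RAAG.gen G w) := by group
      rw [this, hmid]
      exact mul_mem (mul_mem (key w u).1 (memS u v h)) (key u w).1
    | one => simpa using one_mem S
    | mul x y _ _ hx hy =>
      have : (RAAG.gen G w)⁻¹ * (x * y) * RAAG.gen G w =
          ((RAAG.gen G w)⁻¹ * x * RAAG.gen G w) * ((RAAG.gen G w)⁻¹ * y * RAAG.gen G w) := by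
        group
      rw [this]; exact mul_mem hx hy
    | inv x _ hx =>
      have : (RAAG.gen G w)⁻¹ * x⁻¹ * RAAG.gen G w =
          ((RAAG.gen G w)⁻¹ * x * RAAG.gen G w)⁻¹ := by group
      rw [this]; exact inv_mem hx
  -- S is normal
  have hNorm : S.Normal := by
    rw [← Subgroup.normalizer_eq_top_iff]
    rw [eq_top_iff, ← PresentedGroup.closure_range_of (raagRels G), Subgroup.closure_le]
    rintro _ ⟨w, rfl⟩
    show RAAG.gen G w ∈ Subgroup.normalizer (S : Set (RAAG G))
    rw [Subgroup.mem_normalizer_iff]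
    intro h
    constructor
    · exact fun hh => conjS w h hh
    · intro hh
      have := conjS' w _ hh
      simpa [mul_assoc] using this
  -- main claim
  have v0 := Classical.arbitrary V
  have main : ∀ g : RAAG G, g * (RAAG.gen G v0) ^ (-(Multiplicative.toAdd (ℓ g))) ∈ S := by
    have htop : ∀ g : RAAG G, g ∈ Subgroup.closure
        (Set.range (PresentedGroup.of : V → PresentedGroup (raagRels G))) := by
      intro g; rw [PresentedGroup.closure_range_of]; trivial
    intro g
    induction htop g using Subgroup.closure_induction with
    | mem x hx =>
      obtain ⟨w, rfl⟩ := hx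
      have hx1 : ℓ (RAAG.gen G w) = Multiplicative.ofAdd 1 := hℓ w
      show RAAG.gen G w * (RAAG.gen G v0) ^ (-(Multiplicative.toAdd (ℓ (RAAG.gen G w)))) ∈ S
      rw [hx1]
      simpa using (key w v0).2
    | one => simpa using one_mem S
    | mul x y _ _ hx hy =>
      have hexp : Multiplicative.toAdd (ℓ (x * y)) =
          Multiplicative.toAdd (ℓ x) + Multiplicative.toAdd (ℓ y) := by
        rw [map_mul]; rfl
      set m := Multiplicative.toAdd (ℓ x)
      set n := Multiplicative.toAdd (ℓ y)
      have heq : x * y * (RAAG.gen G v0) ^ (-(Multiplicative.toAdd (ℓ (x * y)))) =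
          (x * (RAAG.gen G v0) ^ (-m)) *
            ((RAAG.gen G v0) ^ m * (y * (RAAG.gen G v0) ^ (-n)) * ((RAAG.gen G v0) ^ m)⁻¹) := by
        rw [hexp]; group
      rw [heq]
      exact mul_mem hx (hNorm.conj_mem _ hy _)
    | inv x _ hx =>
      have hexp : Multiplicative.toAdd (ℓ x⁻¹) = -(Multiplicative.toAdd (ℓ x)) := by
        rw [map_inv]; rfl
      set m := Multiplicative.toAdd (ℓ x)
      have heq : x⁻¹ * (RAAG.gen G v0) ^ (-(Multiplicative.toAdd (ℓ x⁻¹))) =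
          ((RAAG.gen G v0) ^ m)⁻¹ * (x * (RAAG.gen G v0) ^ (-m))⁻¹ * (RAAG.gen G v0) ^ m := by
        rw [hexp]; group
      rw [heq]
      have := hNorm.conj_mem _ (inv_mem hx) ((RAAG.gen G v0) ^ m)⁻¹
      simpa [mul_assoc] using this
  -- conclude
  apply le_antisymm
  · intro g hg
    have hg1 : ℓ g = 1 := hg
    have := main g
    rw [hg1] at this
    simpa using this
  · rw [Subgroup.closure_le]
    rintro _ ⟨u, v, h, rfl⟩
    have : ℓ ((RAAG.gen G u)⁻¹ * RAAG.gen G v) = 1 := by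
      rw [map_mul, map_inv, hℓ u, hℓ v]; group
    exact this
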